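/- Let A : X → GL(d,ℝ) satisfy: (i) A is β-Hölder, i.e. there are c₀ > 0 and β ∈ (0,1] with ‖A(x) − A(y)‖ ≤ c₀ d(x,y)^β for all x, y ∈ X; and (ii) for every ε > 0 there is K_ε ≥ 1 such that ‖𝒜ⁿ_x‖ ≤ K_ε e^{εn} and ‖(𝒜ⁿ_x)^{−1}‖ ≤ K_ε e^{εn} for all x ∈ X and n ∈ ℕ. Then there is a constant C such that for every x ∈ X and every y ∈ W^s_loc(x): the limit H^s_{x,y} = lim_{n→∞} (𝒜ⁿ_y)^{−1} 𝒜ⁿ_x exists in GL(d,ℝ), and ‖(𝒜ⁿ_y)^{−1} 𝒜ⁿ_x − I‖ ≤ C d(x,y)^β for all n ∈ ℕ; in particular ‖H^s_{x,y} − I‖ ≤ C d(x,y)^β. -/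

import Mathlib

open scoped Classical

/-- The subshift of finite type determined by a 0-1 transition matrix `M`:
the set of two-sided sequences all of whose transitions are allowed by `M`. -/
def SFT {k : ℕ} (M : Matrix (Fin k) (Fin k) ℕ) : Set (ℤ → Fin k) :=
  {x | ∀ n : ℤ, M (x n) (x (n + 1)) = 1}

/-- The (left) shift map `(f x)_n = x_{n+1}`. -/
def shift {k : ℕ} (x : ℤ → Fin k) : ℤ → Fin k := fun n => x (n + 1)

/-- `sep x y = min {|i| : x_i ≠ y_i}` (defined for `x ≠ y`). -/
noncomputable def sep {k : ℕ} (x y : ℤ → Fin k) : ℕ :=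
  sInf {m : ℕ | ∃ i : ℤ, i.natAbs = m ∧ x i ≠ y i}

/-- The distance `d(x,y) = λ^{sep x y}` for `x ≠ y`, and `d(x,x) = 0`. -/
noncomputable def dSFT {k : ℕ} (lam : ℝ) (x y : ℤ → Fin k) : ℝ :=
  if x = y then 0 else lam ^ sep x y

open scoped MatrixGroups Matrix.Norms.L2Operator

/-- The `GL(d,ℝ)`-valued cocycle generated by `A` over the shift:
`𝒜⁰_x = I` and `𝒜ⁿ⁺¹_x = A(fⁿx) · 𝒜ⁿ_x`. -/
def coc {k d : ℕ} (A : (ℤ → Fin k) → GL (Fin d) ℝ) :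
    (ℤ → Fin k) → ℕ → GL (Fin d) ℝ
  | _, 0 => 1
  | x, n + 1 => A (shift^[n] x) * coc A x n

open Filter Topology Finset

lemma shift_iterate_apply {k : ℕ} (x : ℤ → Fin k) (n : ℕ) (i : ℤ) :
    (shift^[n] x) i = x (i + n) := by
  induction n generalizing x i with
  | zero => simp
  | succ n ih =>
    rw [Function.iterate_succ_apply, ih]
    show x (i + n + 1) = x (i + (n + 1 : ℕ))
    congr 1
    push_cast
    ring

lemma shift_iterate_mem_SFT {k : ℕ} {M : Matrix (Fin k) (Fin k) ℕ} {x : ℤ → Fin k}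
    (hx : x ∈ SFT M) (n : ℕ) : shift^[n] x ∈ SFT M := by
  induction n with
  | zero => simpa using hx
  | succ n ih =>
    rw [Function.iterate_succ_apply']
    exact fun m => ih (m + 1)

lemma dSFT_nonneg {k : ℕ} {lam : ℝ} (h : 0 ≤ lam) (x y : ℤ → Fin k) : 0 ≤ dSFT lam x y := by
  unfold dSFT
  split
  · exact le_refl 0
  · exact pow_nonneg h _

lemma dSFT_shift_le {k : ℕ} {lam : ℝ} (h0 : 0 < lam) (h1 : lam < 1)
    {x y : ℤ → Fin k} (hagree : ∀ i : ℤ, 0 ≤ i → y i = x i) (n : ℕ) :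
    dSFT lam (shift^[n] x) (shift^[n] y) ≤ lam ^ n * dSFT lam x y := by
  by_cases hxy : shift^[n] x = shift^[n] y
  · rw [dSFT, if_pos hxy]
    exact mul_nonneg (pow_nonneg h0.le n) (dSFT_nonneg h0.le x y)
  · have hne : x ≠ y := by rintro rfl; exact hxy rfl
    rw [dSFT, if_neg hxy, dSFT, if_neg hne, ← pow_add]
    apply pow_le_pow_of_le_one h0.le h1.le
    unfold sep
    apply le_csInf
    · obtain ⟨i, hi⟩ := Function.ne_iff.mp hxy
      exact ⟨i.natAbs, i, rfl, hi⟩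
    · rintro m ⟨i, hi, hne'⟩
      rw [shift_iterate_apply, shift_iterate_apply] at hne'
      have hneg : i + n < 0 := by
        by_contra h
        exact hne' (hagree (i + n) (not_lt.mp h)).symm
      have hle : sep x y ≤ (i + n).natAbs := Nat.sInf_le ⟨i + n, rfl, hne'⟩
      unfold sep at hle
      omega

lemma holonomy_aux (k d : ℕ) (M : Matrix (Fin k) (Fin k) ℕ)
    (lam : ℝ) (hlam0 : 0 < lam) (hlam1 : lam < 1)
    (A : (ℤ → Fin k) → GL (Fin d) ℝ)
    (c₀ β : ℝ) (hc₀ : 0 < c₀) (hβ0 : 0 < β)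
    (hHolder : ∀ x ∈ SFT M, ∀ y ∈ SFT M,
      ‖(A x : Matrix (Fin d) (Fin d) ℝ) - (A y : Matrix (Fin d) (Fin d) ℝ)‖
        ≤ c₀ * dSFT lam x y ^ β)
    (hgrowth : ∀ ε : ℝ, 0 < ε → ∃ K : ℝ, 1 ≤ K ∧ ∀ x ∈ SFT M, ∀ n : ℕ,
      ‖(coc A x n : Matrix (Fin d) (Fin d) ℝ)‖ ≤ K * Real.exp (ε * n) ∧
      ‖(((coc A x n)⁻¹ : GL (Fin d) ℝ) : Matrix (Fin d) (Fin d) ℝ)‖ ≤ K * Real.exp (ε * n)) :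
    ∃ C : ℝ, ∀ x ∈ SFT M, ∀ y ∈ SFT M, (∀ i : ℤ, 0 ≤ i → y i = x i) →
      (∀ n : ℕ, ‖(((coc A y n)⁻¹ * coc A x n : GL (Fin d) ℝ) : Matrix (Fin d) (Fin d) ℝ) - 1‖
          ≤ C * dSFT lam x y ^ β) ∧
      ∃ L : Matrix (Fin d) (Fin d) ℝ,
        Filter.Tendsto
          (fun n : ℕ => (((coc A y n)⁻¹ * coc A x n : GL (Fin d) ℝ) : Matrix (Fin d) (Fin d) ℝ))
          Filter.atTop (nhds L) ∧ ‖L - 1‖ ≤ C * dSFT lam x y ^ β := by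
  have hρ0 : (0:ℝ) < lam ^ β := Real.rpow_pos_of_pos hlam0 β
  have hρ1 : lam ^ β < 1 := Real.rpow_lt_one hlam0.le hlam1 hβ0
  set ρ : ℝ := lam ^ β with hρdef
  have hlog : Real.log ρ < 0 := Real.log_neg hρ0 hρ1
  set ε : ℝ := -Real.log ρ / 4 with hεdef
  have hε : 0 < ε := by rw [hεdef]; linarith
  obtain ⟨K, hK1, hK⟩ := hgrowth ε hε
  have hK0 : (0:ℝ) < K := lt_of_lt_of_le one_pos hK1
  set r : ℝ := Real.exp (2 * ε) * ρ with hrdef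
  have hr0 : 0 < r := by positivity
  have hr1 : r < 1 := by
    have hre : r = Real.exp (2 * ε + Real.log ρ) := by
      rw [Real.exp_add, Real.exp_log hρ0]
    rw [hre, Real.exp_lt_one_iff]
    rw [hεdef]; linarith
  have hgeom : Summable fun n : ℕ => r ^ n := summable_geometric_of_lt_one hr0.le hr1
  set C₁ : ℝ := K * K * (K * Real.exp ε) * c₀ with hC₁def
  have hC₁0 : 0 ≤ C₁ := by positivity
  refine ⟨C₁ * (1 - r)⁻¹, ?_⟩
  intro x hx y hy hagree
  have hdd0 : 0 ≤ dSFT lam x y := dSFT_nonneg hlam0.le x y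
  set ddβ : ℝ := dSFT lam x y ^ β with hddef
  have hddβ : 0 ≤ ddβ := Real.rpow_nonneg hdd0 β
  set B : ℕ → Matrix (Fin d) (Fin d) ℝ :=
    fun n => (((coc A y n)⁻¹ * coc A x n : GL (Fin d) ℝ) : Matrix (Fin d) (Fin d) ℝ) with hBdef
  set g : ℕ → Matrix (Fin d) (Fin d) ℝ := fun n =>
    ((((coc A y n)⁻¹ : GL (Fin d) ℝ) : Matrix (Fin d) (Fin d) ℝ)) *
      (((((A (shift^[n] y))⁻¹ : GL (Fin d) ℝ) : Matrix (Fin d) (Fin d) ℝ) *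
          ((A (shift^[n] x) : GL (Fin d) ℝ) : Matrix (Fin d) (Fin d) ℝ) - 1) *
        ((coc A x n : GL (Fin d) ℝ) : Matrix (Fin d) (Fin d) ℝ)) with hgdef
  have hstep : ∀ n, B (n + 1) = B n + g n := by
    intro n
    simp only [hBdef, hgdef, coc, mul_inv_rev, Units.val_mul]
    noncomm_ring
  have hBsum : ∀ n, B n = 1 + ∑ i ∈ Finset.range n, g i := by
    intro n
    induction n with
    | zero => simp [hBdef, coc]
    | succ n ih => rw [hstep n, ih, Finset.sum_range_succ, add_assoc]
  have hAz : ∀ z ∈ SFT M, ‖(((A z)⁻¹ : GL (Fin d) ℝ) : Matrix (Fin d) (Fin d) ℝ)‖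
      ≤ K * Real.exp ε := by
    intro z hz
    have h := (hK z hz 1).2
    have hc : coc A z 1 = A z := by
      show A (shift^[0] z) * coc A z 0 = A z
      simp [coc]
    rw [hc] at h
    simpa using h
  have hgbound : ∀ n, ‖g n‖ ≤ C₁ * ddβ * r ^ n := by
    intro n
    have hb : ((((A (shift^[n] y))⁻¹ : GL (Fin d) ℝ) : Matrix (Fin d) (Fin d) ℝ) *
          ((A (shift^[n] x) : GL (Fin d) ℝ) : Matrix (Fin d) (Fin d) ℝ) - 1)
        = (((A (shift^[n] y))⁻¹ : GL (Fin d) ℝ) : Matrix (Fin d) (Fin d) ℝ) *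
            (((A (shift^[n] x) : GL (Fin d) ℝ) : Matrix (Fin d) (Fin d) ℝ) -
              ((A (shift^[n] y) : GL (Fin d) ℝ) : Matrix (Fin d) (Fin d) ℝ)) := by
      rw [mul_sub]
      congr 1
      exact (Units.inv_mul _).symm
    have hHol : ‖((A (shift^[n] x) : GL (Fin d) ℝ) : Matrix (Fin d) (Fin d) ℝ) -
        ((A (shift^[n] y) : GL (Fin d) ℝ) : Matrix (Fin d) (Fin d) ℝ)‖
        ≤ c₀ * (ρ ^ n * ddβ) := by
      have h1 := hHolder _ (shift_iterate_mem_SFT hx n) _ (shift_iterate_mem_SFT hy n)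
      have h4 : dSFT lam (shift^[n] x) (shift^[n] y) ^ β ≤ (lam ^ n * dSFT lam x y) ^ β :=
        Real.rpow_le_rpow (dSFT_nonneg hlam0.le _ _) (dSFT_shift_le hlam0 hlam1 hagree n) hβ0.le
      rw [Real.mul_rpow (pow_nonneg hlam0.le n) hdd0] at h4
      have h5 : ((lam ^ n : ℝ)) ^ (β : ℝ) = ρ ^ n := by
        rw [hρdef, ← Real.rpow_natCast lam n, ← Real.rpow_natCast (lam ^ (β:ℝ)) n,
          ← Real.rpow_mul hlam0.le, ← Real.rpow_mul hlam0.le, mul_comm]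
      rw [h5] at h4
      calc ‖_ - _‖ ≤ c₀ * dSFT lam (shift^[n] x) (shift^[n] y) ^ β := h1
        _ ≤ c₀ * (ρ ^ n * ddβ) := by
            exact mul_le_mul_of_nonneg_left h4 hc₀.le
    have hm : ‖(((A (shift^[n] y))⁻¹ : GL (Fin d) ℝ) : Matrix (Fin d) (Fin d) ℝ) *
          ((A (shift^[n] x) : GL (Fin d) ℝ) : Matrix (Fin d) (Fin d) ℝ) - 1‖
        ≤ (K * Real.exp ε) * (c₀ * (ρ ^ n * ddβ)) := by
      rw [hb]
      exact (norm_mul_le _ _).trans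
        (mul_le_mul (hAz _ (shift_iterate_mem_SFT hy n)) hHol (norm_nonneg _) (by positivity))
    have h1 := (hK x hx n).1
    have h2 := (hK y hy n).2
    have he : Real.exp (ε * n) * Real.exp (ε * n) * ρ ^ n = r ^ n := by
      have hee : ε * n + ε * n = (n : ℝ) * (2 * ε) := by ring
      rw [← Real.exp_add, hee, Real.exp_nat_mul, hrdef, mul_pow]
    calc ‖g n‖ ≤ ‖(((coc A y n)⁻¹ : GL (Fin d) ℝ) : Matrix (Fin d) (Fin d) ℝ)‖ *
          (‖(((A (shift^[n] y))⁻¹ : GL (Fin d) ℝ) : Matrix (Fin d) (Fin d) ℝ) *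
              ((A (shift^[n] x) : GL (Fin d) ℝ) : Matrix (Fin d) (Fin d) ℝ) - 1‖ *
            ‖((coc A x n : GL (Fin d) ℝ) : Matrix (Fin d) (Fin d) ℝ)‖) :=
        (norm_mul_le _ _).trans (mul_le_mul_of_nonneg_left (norm_mul_le _ _) (norm_nonneg _))
      _ ≤ (K * Real.exp (ε * n)) *
            (((K * Real.exp ε) * (c₀ * (ρ ^ n * ddβ))) * (K * Real.exp (ε * n))) := by
          gcongr
      _ = C₁ * ddβ * (Real.exp (ε * n) * Real.exp (ε * n) * ρ ^ n) := by
          rw [hC₁def]; ring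
      _ = C₁ * ddβ * r ^ n := by rw [he]
  have hsummable : Summable g :=
    Summable.of_norm_bounded (hgeom.mul_left (C₁ * ddβ)) hgbound
  have hsn : Summable fun i => ‖g i‖ :=
    Summable.of_nonneg_of_le (fun i => norm_nonneg _) hgbound (hgeom.mul_left (C₁ * ddβ))
  have hgsum : ∀ n, ∑ i ∈ Finset.range n, ‖g i‖ ≤ C₁ * (1 - r)⁻¹ * ddβ := by
    intro n
    calc ∑ i ∈ Finset.range n, ‖g i‖ ≤ ∑ i ∈ Finset.range n, C₁ * ddβ * r ^ i :=
        Finset.sum_le_sum fun i _ => hgbound i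
      _ = C₁ * ddβ * ∑ i ∈ Finset.range n, r ^ i := by rw [Finset.mul_sum]
      _ ≤ C₁ * ddβ * (1 - r)⁻¹ := by
          refine mul_le_mul_of_nonneg_left ?_ (by positivity)
          have h := Summable.sum_le_tsum (Finset.range n) (fun i _ => pow_nonneg hr0.le i) hgeom
          rwa [tsum_geometric_of_lt_one hr0.le hr1] at h
      _ = C₁ * (1 - r)⁻¹ * ddβ := by ring
  constructor
  · intro n
    calc ‖B n - 1‖ = ‖∑ i ∈ Finset.range n, g i‖ := by rw [hBsum n, add_sub_cancel_left]
      _ ≤ ∑ i ∈ Finset.range n, ‖g i‖ := norm_sum_le _ _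
      _ ≤ C₁ * (1 - r)⁻¹ * ddβ := hgsum n
  · refine ⟨1 + ∑' i, g i, ?_, ?_⟩
    · have h2 : Tendsto (fun n => 1 + ∑ i ∈ Finset.range n, g i) atTop (𝓝 (1 + ∑' i, g i)) :=
        tendsto_const_nhds.add hsummable.hasSum.tendsto_sum_nat
      exact h2.congr fun n => (hBsum n).symm
    · rw [add_sub_cancel_left]
      calc ‖∑' i, g i‖ ≤ ∑' i, ‖g i‖ := norm_tsum_le_tsum_norm hsn
        _ ≤ ∑' i, C₁ * ddβ * r ^ i := Summable.tsum_le_tsum hgbound hsn (hgeom.mul_left (C₁ * ddβ))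
        _ = C₁ * ddβ * (1 - r)⁻¹ := by
            rw [tsum_mul_left, tsum_geometric_of_lt_one hr0.le hr1]
        _ = C₁ * (1 - r)⁻¹ * ddβ := by ring

/-- Existence and Hölder estimates of stable holonomies for a β-Hölder `GL(d,ℝ)`-valued
cocycle with sub-exponential growth over a subshift of finite type (Proposition 3.3). -/
theorem stmt_9 (k d : ℕ) (hk : 1 ≤ k) (M : Matrix (Fin k) (Fin k) ℕ)
    (hM : ∀ i j, M i j = 0 ∨ M i j = 1)
    (lam : ℝ) (hlam0 : 0 < lam) (hlam1 : lam < 1)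
    (A : (ℤ → Fin k) → GL (Fin d) ℝ)
    (c₀ β : ℝ) (hc₀ : 0 < c₀) (hβ0 : 0 < β) (hβ1 : β ≤ 1)
    (hHolder : ∀ x ∈ SFT M, ∀ y ∈ SFT M,
      ‖(A x : Matrix (Fin d) (Fin d) ℝ) - (A y : Matrix (Fin d) (Fin d) ℝ)‖
        ≤ c₀ * dSFT lam x y ^ β)
    (hgrowth : ∀ ε : ℝ, 0 < ε → ∃ K : ℝ, 1 ≤ K ∧ ∀ x ∈ SFT M, ∀ n : ℕ,
      ‖(coc A x n : Matrix (Fin d) (Fin d) ℝ)‖ ≤ K * Real.exp (ε * n) ∧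
      ‖(((coc A x n)⁻¹ : GL (Fin d) ℝ) : Matrix (Fin d) (Fin d) ℝ)‖ ≤ K * Real.exp (ε * n)) :
    ∃ C : ℝ, ∀ x ∈ SFT M, ∀ y ∈ SFT M, (∀ i : ℤ, 0 ≤ i → y i = x i) →
      (∃ Hs : GL (Fin d) ℝ,
        Filter.Tendsto
          (fun n : ℕ => (((coc A y n)⁻¹ * coc A x n : GL (Fin d) ℝ) : Matrix (Fin d) (Fin d) ℝ))
          Filter.atTop (nhds (Hs : Matrix (Fin d) (Fin d) ℝ)) ∧
        ‖(Hs : Matrix (Fin d) (Fin d) ℝ) - 1‖ ≤ C * dSFT lam x y ^ β) ∧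
      ∀ n : ℕ,
        ‖(((coc A y n)⁻¹ * coc A x n : GL (Fin d) ℝ) : Matrix (Fin d) (Fin d) ℝ) - 1‖
          ≤ C * dSFT lam x y ^ β := by
  obtain ⟨C, hC⟩ := holonomy_aux k d M lam hlam0 hlam1 A c₀ β hc₀ hβ0 hHolder hgrowth
  refine ⟨C, ?_⟩
  intro x hx y hy hagree
  obtain ⟨hbound, L, hL, hLb⟩ := hC x hx y hy hagree
  have hagree' : ∀ i : ℤ, 0 ≤ i → x i = y i := fun i hi => (hagree i hi).symm
  obtain ⟨hbound', L', hL', hLb'⟩ := hC y hy x hx hagree'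
  have hmul : ∀ n : ℕ,
      (((coc A y n)⁻¹ * coc A x n : GL (Fin d) ℝ) : Matrix (Fin d) (Fin d) ℝ) *
        (((coc A x n)⁻¹ * coc A y n : GL (Fin d) ℝ) : Matrix (Fin d) (Fin d) ℝ) = 1 := by
    intro n
    rw [← Units.val_mul]
    have h : ((coc A y n)⁻¹ * coc A x n) * ((coc A x n)⁻¹ * coc A y n) = (1 : GL (Fin d) ℝ) := by
      group
    rw [h, Units.val_one]
  have hmul' : ∀ n : ℕ,
      (((coc A x n)⁻¹ * coc A y n : GL (Fin d) ℝ) : Matrix (Fin d) (Fin d) ℝ) *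
        (((coc A y n)⁻¹ * coc A x n : GL (Fin d) ℝ) : Matrix (Fin d) (Fin d) ℝ) = 1 := by
    intro n
    rw [← Units.val_mul]
    have h : ((coc A x n)⁻¹ * coc A y n) * ((coc A y n)⁻¹ * coc A x n) = (1 : GL (Fin d) ℝ) := by
      group
    rw [h, Units.val_one]
  have hLL' : L * L' = 1 :=
    tendsto_nhds_unique (hL.mul hL') ((tendsto_const_nhds (α := ℕ)).congr fun n => (hmul n).symm)
  have hL'L : L' * L = 1 :=
    tendsto_nhds_unique (hL'.mul hL) ((tendsto_const_nhds (α := ℕ)).congr fun n => (hmul' n).symm)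
  exact ⟨⟨⟨L, L', hLL', hL'L⟩, hL, hLb⟩, hbound⟩
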